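/- Every eigenvalue λ of the pencil H_{N;c} - λD_{m,n} satisfies |λ| < 2 + |c|. -/

import Mathlib

open Matrix

noncomputable def Hmat (N : ℕ) (c : ℂ) : Matrix (Fin N) (Fin N) ℂ :=
  fun i j => if (i : ℕ) = (j : ℕ) then c
    else if (i : ℕ) + 1 = (j : ℕ) ∨ (j : ℕ) + 1 = (i : ℕ) then 1 else 0

noncomputable def Dmat (m n : ℕ) : Matrix (Fin (m + n)) (Fin (m + n)) ℂ :=
  Matrix.diagonal (fun i => if (i : ℕ) < m then 1 else -1)

noncomputable def yext (N : ℕ) (x : Fin N → ℂ) : ℕ → ℂ :=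
  fun t => if h : t < N then x ⟨t, h⟩ else 0

lemma yext_le (N : ℕ) (x : Fin N → ℂ) (M : ℝ) (hM : ∀ i, ‖x i‖ ≤ M)
    (hM0 : 0 ≤ M) (t : ℕ) : ‖yext N x t‖ ≤ M := by
  unfold yext; split_ifs with h
  · exact hM _
  · simpa using hM0

lemma row_sum (N : ℕ) (x : Fin N → ℂ) (b : ℂ) (k : ℕ) (hk : k < N) :
    ∑ j : Fin N, ((if k = (j:ℕ) then b
      else if k + 1 = (j:ℕ) ∨ (j:ℕ) + 1 = k then (1:ℂ) else 0) * x j)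
    = (if 1 ≤ k then yext N x (k-1) else 0) + b * x ⟨k, hk⟩ + yext N x (k+1) := by
  have hsplit : ∀ j : Fin N, ((if k = (j:ℕ) then b
      else if k + 1 = (j:ℕ) ∨ (j:ℕ) + 1 = k then (1:ℂ) else 0) * x j)
    = (if (j:ℕ) + 1 = k then x j else 0) + (if k = (j:ℕ) then b * x j else 0)
      + (if k + 1 = (j:ℕ) then x j else 0) := by
    intro j
    by_cases h1 : k = (j:ℕ) <;> by_cases h2 : k + 1 = (j:ℕ) <;>
      by_cases h3 : (j:ℕ) + 1 = k <;> simp [h1, h2, h3] <;> omega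
  rw [Finset.sum_congr rfl fun j _ => hsplit j]
  rw [Finset.sum_add_distrib, Finset.sum_add_distrib]
  congr 1
  · congr 1
    · -- predecessor sum
      by_cases h1 : 1 ≤ k
      · have hk1 : k - 1 < N := by omega
        have heq : ∀ j : Fin N, ((j:ℕ) + 1 = k) ↔ (⟨k-1, hk1⟩ : Fin N) = j := by
          intro j; rw [Fin.ext_iff]; simp; omega
        simp_rw [heq]
        rw [Finset.sum_ite_eq]
        simp [yext, hk1, h1]
      · have hk0 : k = 0 := by omega
        subst hk0
        simp
    · -- diagonal
      have heq : ∀ j : Fin N, (k = (j:ℕ)) ↔ (⟨k, hk⟩ : Fin N) = j := by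
        intro j; rw [Fin.ext_iff]
      simp_rw [heq]
      rw [Finset.sum_ite_eq]
      simp
  · -- successor sum
    by_cases h1 : k + 1 < N
    · have heq : ∀ j : Fin N, (k + 1 = (j:ℕ)) ↔ (⟨k+1, h1⟩ : Fin N) = j := by
        intro j; rw [Fin.ext_iff]
      simp_rw [heq]
      rw [Finset.sum_ite_eq]
      simp [yext, h1]
    · have hnone : ∀ j : Fin N, ¬ (k + 1 = (j:ℕ)) := fun j hh => by
        have := j.isLt; omega
      simp [yext, h1, hnone]

theorem pencil_eigenvalue_bound (m n : ℕ) (c : ℝ) (lam : ℂ)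
    (h : ¬ IsUnit (Hmat (m + n) (c : ℂ) - lam • Dmat m n)) :
    ‖lam‖ < 2 + |c| := by
  by_contra hcon
  push_neg at hcon
  set N := m + n with hNdef
  have hdet : (Hmat N (c:ℂ) - lam • Dmat m n).det = 0 := by
    by_contra hd
    exact h ((Matrix.isUnit_iff_isUnit_det _).mpr (isUnit_iff_ne_zero.mpr hd))
  obtain ⟨x, hx0, hx⟩ := Matrix.exists_mulVec_eq_zero_iff.mpr hdet
  have hN : 0 < N := by
    rcases Nat.eq_zero_or_pos N with h0 | h0
    · exfalso; apply hx0; funext i; exact absurd i.isLt (by omega)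
    · exact h0
  haveI : Nonempty (Fin N) := Fin.pos_iff_nonempty.mp hN
  obtain ⟨i0, hi0⟩ := Finite.exists_max fun i : Fin N => ‖x i‖
  set M := ‖x i0‖ with hMdef
  have hMpos : 0 < M := by
    have hxe : ∃ i, x i ≠ 0 := by
      by_contra hc; push_neg at hc; exact hx0 (funext hc)
    obtain ⟨i1, hi1⟩ := hxe
    exact lt_of_lt_of_le (norm_pos_iff.mpr hi1) (hi0 i1)
  have hy : ∀ t, ‖yext N x t‖ ≤ M := yext_le N x M hi0 hMpos.le
  set d : ℕ → ℂ := fun k => if k < m then 1 else -1 with hddef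
  have hb : ∀ k, 2 ≤ ‖(c:ℂ) - lam * d k‖ := by
    intro k
    have hd1 : ‖d k‖ = 1 := by
      simp only [hddef]; split_ifs <;> simp
    have h1 : ‖lam * d k‖ = ‖lam‖ := by
      rw [norm_mul, hd1, mul_one]
    have h2 := norm_sub_norm_le (lam * d k) (c:ℂ)
    rw [norm_sub_rev ((c:ℂ)) (lam * d k)] at *
    rw [h1, Complex.norm_real, Real.norm_eq_abs] at h2
    linarith
  have hentry : ∀ i j : Fin N, (Hmat N (c:ℂ) - lam • Dmat m n) i j
      = (if (i:ℕ) = (j:ℕ) then ((c:ℂ) - lam * d (i:ℕ))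
         else if (i:ℕ) + 1 = (j:ℕ) ∨ (j:ℕ) + 1 = (i:ℕ) then 1 else 0) := by
    intro i j
    simp only [Matrix.sub_apply, Matrix.smul_apply, Hmat, Dmat, Matrix.diagonal_apply,
      smul_eq_mul, hddef]
    by_cases hij : i = j
    · subst hij; simp
    · have hv : (i:ℕ) ≠ (j:ℕ) := fun hh => hij (Fin.ext hh)
      simp [hij, hv]
  have hrow : ∀ k, ∀ hk : k < N,
      (if 1 ≤ k then yext N x (k-1) else 0)
        + ((c:ℂ) - lam * d k) * x ⟨k, hk⟩ + yext N x (k+1) = 0 := by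
    intro k hk
    have hthis := congrFun hx ⟨k, hk⟩
    rw [Matrix.mulVec, dotProduct] at hthis
    simp only [hentry, Pi.zero_apply] at hthis
    rw [row_sum N x ((c:ℂ) - lam * d k) k hk] at hthis
    exact hthis
  have key : ∀ k, ‖yext N x k‖ < M := by
    intro k
    induction k with
    | zero =>
      refine lt_of_le_of_ne (hy 0) ?_
      intro hEq
      have hr := hrow 0 hN
      rw [if_neg (by omega : ¬ (1:ℕ) ≤ 0)] at hr
      have hy0 : yext N x 0 = x ⟨0, hN⟩ := by simp [yext, hN]
      have heq2 : ((c:ℂ) - lam * d 0) * x ⟨0, hN⟩ = - yext N x 1 := by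
        linear_combination hr
      have habs := congrArg (‖·‖) heq2
      rw [norm_mul, norm_neg, ← hy0, hEq] at habs
      nlinarith [hb 0, hy 1, hMpos]
    | succ k ih =>
      by_cases hk1 : k + 1 < N
      · refine lt_of_le_of_ne (hy (k+1)) ?_
        intro hEq
        have hr := hrow (k+1) hk1
        rw [if_pos (by omega : 1 ≤ k + 1)] at hr
        have hpred : k + 1 - 1 = k := rfl
        rw [hpred] at hr
        have hval : x ⟨k+1, hk1⟩ = yext N x (k+1) := by simp [yext, hk1]
        rw [hval] at hr
        have heq2 : ((c:ℂ) - lam * d (k+1)) * yext N x (k+1)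
            = -(yext N x k + yext N x (k+2)) := by
          linear_combination hr
        have habs := congrArg (‖·‖) heq2
        rw [norm_mul, norm_neg, hEq] at habs
        have hle : ‖yext N x k + yext N x (k+2)‖
            ≤ ‖yext N x k‖ + ‖yext N x (k+2)‖ :=
          norm_add_le _ _
        nlinarith [hb (k+1), hy (k+2), ih, hMpos]
      · have hz : yext N x (k+1) = 0 := by simp [yext, hk1]
        rw [hz]; simpa using hMpos
  have hfin := key (i0 : ℕ)
  have : yext N x (i0 : ℕ) = x i0 := by simp [yext, i0.isLt]
  rw [this] at hfin
  exact lt_irrefl M hfin
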